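/- (Putinar's Theorem) Let S = {g₁, …, g_s} ⊆ ℝ[X₁, …, Xₙ] and suppose the quadratic module M_S is archimedean, i.e., for every polynomial f ∈ ℝ[X₁, …, Xₙ] there exists N ∈ ℕ with N − f ∈ M_S. Then every f ∈ ℝ[X₁, …, Xₙ] with f(x) > 0 for all x ∈ K_S lies in M_S; that is, f = σ₀ + σ₁g₁ + ⋯ + σ_s g_s for some sums of squares σ₀, …, σ_s in ℝ[X₁, …, Xₙ]. -/

import Mathlib

open MvPolynomial Finset

/-- `f` is a sum of squares in a commutative ring. -/
def IsSOS {R : Type*} [CommRing R] (f : R) : Prop :=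
  ∃ (k : ℕ) (p : Fin k → R), f = ∑ i, p i ^ 2

/-- `f` belongs to the quadratic module generated by `g₁, …, g_s`, i.e.
`f = σ₀ + σ₁ g₁ + ⋯ + σ_s g_s` with each `σᵢ` a sum of squares. -/
def InQuadraticModule {R : Type*} [CommRing R] {n s : ℕ}
    (g : Fin s → MvPolynomial (Fin n) R) (f : MvPolynomial (Fin n) R) : Prop :=
  ∃ (σ₀ : MvPolynomial (Fin n) R) (σ : Fin s → MvPolynomial (Fin n) R),
    IsSOS σ₀ ∧ (∀ i, IsSOS (σ i)) ∧ f = σ₀ + ∑ i, σ i * g i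

variable {R : Type*} [CommRing R]

lemma IsSOS.zero : IsSOS (0 : R) := ⟨0, ![], by simp⟩

lemma IsSOS.sq (p : R) : IsSOS (p ^ 2) := ⟨1, ![p], by simp⟩

lemma IsSOS.one : IsSOS (1 : R) := by simpa using IsSOS.sq (1 : R)

lemma IsSOS.add {a b : R} (ha : IsSOS a) (hb : IsSOS b) : IsSOS (a + b) := by
  obtain ⟨k, p, rfl⟩ := ha
  obtain ⟨l, q, rfl⟩ := hb
  refine ⟨k + l, Fin.append p q, ?_⟩
  rw [Fin.sum_univ_add]
  simp [Fin.append_left, Fin.append_right]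

lemma IsSOS.mul_sq {a : R} (ha : IsSOS a) (p : R) : IsSOS (p ^ 2 * a) := by
  obtain ⟨k, q, rfl⟩ := ha
  exact ⟨k, fun i => p * q i, by rw [Finset.mul_sum]; congr 1; ext i; ring⟩


namespace PutinarAux

variable {n : ℕ}

local notation "A" => MvPolynomial (Fin n) ℝ

/-- Abstract quadratic module. -/
structure IsQM (Q : Set (MvPolynomial (Fin n) ℝ)) : Prop where
  add : ∀ {a b : A}, a ∈ Q → b ∈ Q → a + b ∈ Q
  sq : ∀ p : A, p ^ 2 ∈ Q
  mul_sq : ∀ (p : A) {q : A}, q ∈ Q → p ^ 2 * q ∈ Q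

namespace IsQM
variable {Q : Set (MvPolynomial (Fin n) ℝ)} (hQ : IsQM Q)
include hQ
lemma zero_mem : (0 : A) ∈ Q := by simpa using hQ.sq 0
lemma const_mem {c : ℝ} (hc : 0 ≤ c) : (C c : A) ∈ Q := by
  have : (C (Real.sqrt c) : A) ^ 2 ∈ Q := hQ.sq _
  rwa [← map_pow, Real.sq_sqrt hc] at this
lemma smul_mem {c : ℝ} (hc : 0 ≤ c) {q : A} (hq : q ∈ Q) : C c * q ∈ Q := by
  have : (C (Real.sqrt c) : A) ^ 2 * q ∈ Q := hQ.mul_sq _ hq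
  rwa [← map_pow, Real.sq_sqrt hc] at this
lemma sos_mem {a : A} (ha : IsSOS a) : a ∈ Q := by
  obtain ⟨k, p, rfl⟩ := ha
  classical
  induction (Finset.univ : Finset (Fin k)) using Finset.induction with
  | empty => simpa using hQ.zero_mem
  | insert _ _ h ih => rw [Finset.sum_insert h]; exact hQ.add (hQ.sq _) ih

/-- **Key descent lemma.** If `Q` is an archimedean quadratic module, `p` is a
sum of squares, and `p * a ∈ 1 + Q`, then `a ∈ Q`. -/
lemma mem_of_sos_mul_mem (harch : ∀ p : A, ∃ N : ℕ, (N : A) - p ∈ Q)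
    {a p : A} (hp : IsSOS p) (h1 : p * a - 1 ∈ Q) : a ∈ Q := by
  obtain ⟨l0, hl0⟩ := harch (-a)
  rw [sub_neg_eq_add, ← map_natCast (C : ℝ →+* A)] at hl0
  obtain ⟨k, hk⟩ := harch p
  rw [← map_natCast (C : ℝ →+* A)] at hk
  obtain ⟨c, hc⟩ := harch (p * (p * a - 1))
  rw [← map_natCast (C : ℝ →+* A)] at hc
  obtain ⟨e, he⟩ := harch (p ^ 2)
  rw [← map_natCast (C : ℝ →+* A)] at he
  set Λ : ℝ := (l0 : ℝ) with hΛ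
  set κ : ℝ := (k : ℝ) with hκ
  set γ : ℝ := (c : ℝ) with hγ
  set ε : ℝ := (e : ℝ) with hε
  have hΛ0 : 0 ≤ Λ := Nat.cast_nonneg _
  have hκ0 : 0 ≤ κ := Nat.cast_nonneg _
  have hγ0 : 0 ≤ γ := Nat.cast_nonneg _
  have hε0 : 0 ≤ ε := Nat.cast_nonneg _
  -- single descent step
  have step : ∀ lam t : ℝ, 0 ≤ lam → 0 ≤ t → C lam + a ∈ Q →
      C (lam - 2*t + t^2*(κ + γ + lam*ε)) + a ∈ Q := by
    intro lam t hlam ht hmem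
    have t1 : (1 - C t * p) ^ 2 * (C lam + a) ∈ Q := hQ.mul_sq _ hmem
    have t2 : C (2*t) * (p * a - 1) ∈ Q := hQ.smul_mem (by positivity) h1
    have t3 : C (t^2) * (C κ - p) ∈ Q := hQ.smul_mem (by positivity) hk
    have t4 : C (t^2) * (C γ - p * (p * a - 1)) ∈ Q := hQ.smul_mem (by positivity) hc
    have t5 : C (2*(lam*t)) * p ∈ Q := hQ.smul_mem (by positivity) (hQ.sos_mem hp)
    have t6 : C (lam*t^2) * (C ε - p^2) ∈ Q := hQ.smul_mem (by positivity) he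
    have hsum := hQ.add (hQ.add (hQ.add (hQ.add (hQ.add t1 t2) t3) t4) t5) t6
    have heq : (1 - C t * p) ^ 2 * (C lam + a) + C (2*t) * (p * a - 1)
        + C (t^2) * (C κ - p) + C (t^2) * (C γ - p * (p * a - 1))
        + C (2*(lam*t)) * p + C (lam*t^2) * (C ε - p^2)
        = C (lam - 2*t + t^2*(κ + γ + lam*ε)) + a := by
      simp only [map_sub, map_add, map_mul, map_pow, map_one, map_ofNat]
      ring
    rwa [heq] at hsum
  set D : ℝ := κ + γ + Λ*ε + 1 with hD
  have hD1 : 1 ≤ D := by nlinarith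
  have hD0 : 0 < D := by linarith
  have key : ∀ m : ℕ, a ∈ Q ∨ ∃ μ : ℝ, 0 ≤ μ ∧ μ ≤ Λ - m/D ∧ C μ + a ∈ Q := by
    intro m
    induction m with
    | zero => exact Or.inr ⟨Λ, hΛ0, by simp, hl0⟩
    | succ m ih =>
      rcases ih with h | ⟨μ, hμ0, hμle, hμmem⟩
      · exact Or.inl h
      have hμΛ : μ ≤ Λ := le_trans hμle (by
        have : 0 ≤ (m:ℝ)/D := by positivity
        linarith)
      have hmem' := step μ (1/D) hμ0 (by positivity) hμmem
      set μ' : ℝ := μ - 2*(1/D) + (1/D)^2*(κ + γ + μ*ε) with hμ'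
      have hbound : κ + γ + μ*ε ≤ D := by nlinarith
      have hle : μ' ≤ μ - 1/D := by
        have h2 : (1/D)^2*(κ + γ + μ*ε) ≤ (1/D)^2 * D := by
          apply mul_le_mul_of_nonneg_left hbound (by positivity)
        have h3 : (1/D)^2 * D = 1/D := by field_simp
        rw [h3] at h2
        linarith
      have hle2 : μ' ≤ Λ - ((m:ℝ)+1)/D := by
        have hsplit : ((m:ℝ)+1)/D = (m:ℝ)/D + 1/D := by ring
        rw [hsplit]
        linarith
      rcases le_or_gt 0 μ' with hpos | hneg
      · exact Or.inr ⟨μ', hpos, by push_cast; exact hle2, hmem'⟩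
      · left
        have : a = C (-μ') + (C μ' + a) := by rw [map_neg]; ring
        rw [this]
        exact hQ.add (hQ.const_mem (by linarith)) hmem'
  obtain ⟨m, hm⟩ := exists_nat_gt (Λ * D)
  rcases key m with h | ⟨μ, hμ0, hμle, _⟩
  · exact h
  · exfalso
    have : Λ - (m:ℝ)/D < 0 := by
      rw [sub_neg, lt_div_iff₀ hD0]
      linarith
    linarith
lemma neg_one_not_mem_of_neg_const {r : ℝ} (hr : r < 0) (h : (C r : A) ∈ Q)
    (h1 : (-1 : A) ∉ Q) : False := by
  have h2 : C (-1/r) * C r ∈ Q :=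
    hQ.smul_mem (le_of_lt (div_pos_of_neg_of_neg (by norm_num) hr)) h
  rw [← map_mul] at h2
  have : (-1/r) * r = -1 := by rw [div_mul_cancel₀]; exact ne_of_lt hr
  rw [this] at h2
  exact h1 (by simpa using h2)
lemma of_smul_mem {c : ℝ} (hc : 0 < c) {q : A} (h : C c * q ∈ Q) : q ∈ Q := by
  have h2 : C c⁻¹ * (C c * q) ∈ Q := hQ.smul_mem (inv_nonneg.mpr hc.le) h
  rwa [← mul_assoc, ← map_mul, inv_mul_cancel₀ (ne_of_gt hc), map_one, one_mul] at h2
end IsQM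

/-- The set of real upper bounds of `a` relative to `Q`. -/
def upSet (Q : Set (MvPolynomial (Fin n) ℝ)) (a : MvPolynomial (Fin n) ℝ) : Set ℝ :=
  {r : ℝ | C r - a ∈ Q}

/-- The associated state/evaluation functional. -/
noncomputable def phi (Q : Set (MvPolynomial (Fin n) ℝ)) (a : MvPolynomial (Fin n) ℝ) : ℝ :=
  sInf (upSet Q a)

/-- The archimedean property. -/
def Arch (Q : Set (MvPolynomial (Fin n) ℝ)) : Prop :=
  ∀ p : MvPolynomial (Fin n) ℝ, ∃ N : ℕ, (N : MvPolynomial (Fin n) ℝ) - p ∈ Q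

section Phi
variable {Q : Set (MvPolynomial (Fin n) ℝ)} (hQ : IsQM Q)
  (harch : Arch Q)
  (hno : (-1 : MvPolynomial (Fin n) ℝ) ∉ Q)
  (hsemi : ∀ a : MvPolynomial (Fin n) ℝ, a ∈ Q ∨ -a ∈ Q)

include hQ in
lemma upSet_up {a : A} {r s : ℝ} (h : r ∈ upSet Q a) (hrs : r ≤ s) : s ∈ upSet Q a := by
  show (C s : A) - a ∈ Q
  rw [show (C s : A) - a = C (s - r) + (C r - a) by rw [map_sub]; ring]
  exact hQ.add (hQ.const_mem (by linarith)) h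

include harch in
lemma upSet_nonempty (a : A) : (upSet Q a).Nonempty := by
  obtain ⟨N, hN⟩ := harch a
  exact ⟨(N : ℝ), by simpa [upSet, map_natCast] using hN⟩

include hQ hno in
lemma const_nonneg {r : ℝ} (h : (C r : A) ∈ Q) : 0 ≤ r := by
  by_contra hr
  exact hQ.neg_one_not_mem_of_neg_const (lt_of_not_ge hr) h hno

include hQ harch hno in
lemma upSet_bddBelow (a : A) : BddBelow (upSet Q a) := by
  obtain ⟨N, hN⟩ := harch (-a)
  rw [sub_neg_eq_add] at hN
  refine ⟨-(N : ℝ), fun r hr => ?_⟩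
  have : (C (r + (N : ℝ)) : A) ∈ Q := by
    have := hQ.add hr hN
    rwa [show (C r : A) - a + ((N:A) + a) = C (r + (N:ℝ)) by
      rw [map_add, map_natCast]; ring] at this
  linarith [const_nonneg hQ hno this]

include hQ harch hno in
lemma mem_of_phi_lt {a : A} {r : ℝ} (h : phi Q a < r) : r ∈ upSet Q a := by
  obtain ⟨u, hu, hur⟩ := exists_lt_of_csInf_lt (upSet_nonempty harch a) h
  exact upSet_up hQ hu hur.le

include hQ harch hno in
lemma phi_le_of_mem {a : A} {r : ℝ} (h : r ∈ upSet Q a) : phi Q a ≤ r :=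
  csInf_le (upSet_bddBelow hQ harch hno a) h

include hQ harch hno hsemi in
lemma sub_mem_of_lt_phi {a : A} {r : ℝ} (h : r < phi Q a) : a - C r ∈ Q := by
  rcases hsemi (C r - a) with hmem | hmem
  · exact absurd (phi_le_of_mem hQ harch hno hmem) (not_le.mpr h)
  · rwa [neg_sub] at hmem

include hQ hno in
lemma phi_const (r : ℝ) : phi Q (C r) = r := by
  have : upSet Q (C r) = Set.Ici r := by
    ext s
    constructor
    · intro hs
      have : (C (s - r) : A) ∈ Q := by rw [map_sub]; exact hs
      have := const_nonneg hQ hno this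
      simpa using by linarith
    · intro hs
      show (C s : A) - C r ∈ Q
      rw [← map_sub]
      exact hQ.const_mem (by simpa using hs)
  rw [phi, this, csInf_Ici]

include hQ harch hno in
lemma phi_nonneg {a : A} (ha : a ∈ Q) : 0 ≤ phi Q a := by
  refine le_csInf (upSet_nonempty harch a) fun r hr => ?_
  have : (C r : A) ∈ Q := by
    have := hQ.add hr ha
    rwa [sub_add_cancel] at this
  exact const_nonneg hQ hno this

include hQ harch hno hsemi in
lemma phi_add (a b : A) : phi Q (a + b) = phi Q a + phi Q b := by
  have le1 : phi Q (a + b) ≤ phi Q a + phi Q b := by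
    refine le_of_forall_pos_le_add fun ε hε => ?_
    have ha : (phi Q a + ε/2) ∈ upSet Q a := mem_of_phi_lt hQ harch hno (by linarith)
    have hb : (phi Q b + ε/2) ∈ upSet Q b := mem_of_phi_lt hQ harch hno (by linarith)
    have : (phi Q a + ε/2) + (phi Q b + ε/2) ∈ upSet Q (a + b) := by
      have := hQ.add ha hb
      show (C (phi Q a + ε/2 + (phi Q b + ε/2)) : A) - (a + b) ∈ Q
      rwa [show (C (phi Q a + ε/2 + (phi Q b + ε/2)) : A) - (a + b)
        = (C (phi Q a + ε/2) - a) + (C (phi Q b + ε/2) - b) by rw [map_add]; ring]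
    have := phi_le_of_mem hQ harch hno this
    linarith
  have le2 : phi Q a + phi Q b ≤ phi Q (a + b) := by
    refine le_of_forall_pos_le_add fun ε hε => ?_
    have hs : (phi Q (a+b) + ε/2) ∈ upSet Q (a + b) := mem_of_phi_lt hQ harch hno (by linarith)
    have hr : a - C (phi Q a - ε/2) ∈ Q := sub_mem_of_lt_phi hQ harch hno hsemi (by linarith)
    have hb : (phi Q (a+b) + ε/2) - (phi Q a - ε/2) ∈ upSet Q b := by
      have := hQ.add hs hr
      show (C ((phi Q (a+b) + ε/2) - (phi Q a - ε/2)) : A) - b ∈ Q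
      rwa [show (C ((phi Q (a+b) + ε/2) - (phi Q a - ε/2)) : A) - b
        = (C (phi Q (a+b) + ε/2) - (a + b)) + (a - C (phi Q a - ε/2)) by
          rw [map_sub]; ring]
    have := phi_le_of_mem hQ harch hno hb
    linarith
  linarith

include hQ hno in
lemma phi_zero : phi Q 0 = 0 := by
  have := phi_const (Q := Q) hQ hno 0
  rwa [map_zero] at this

include hQ harch hno hsemi in
lemma phi_neg (a : A) : phi Q (-a) = - phi Q a := by
  have h := phi_add hQ harch hno hsemi a (-a)
  rw [add_neg_cancel, phi_zero hQ hno] at h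
  linarith

include hQ harch hno hsemi in
lemma phi_smul (c : ℝ) (a : A) : phi Q (C c * a) = c * phi Q a := by
  rcases lt_trichotomy c 0 with hc | hc | hc
  · have h1 : C (-c) * a = -(C c * a) := by rw [map_neg]; ring
    have hpos : ∀ d : ℝ, 0 < d → ∀ b : A, phi Q (C d * b) = d * phi Q b := by
      intro d hd b
      have hle : phi Q (C d * b) ≤ d * phi Q b := by
        refine le_of_forall_pos_le_add fun ε hε => ?_
        have hmem : (phi Q b + ε/d) ∈ upSet Q b := mem_of_phi_lt hQ harch hno (by have := div_pos hε hd; linarith)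
        have : d * (phi Q b + ε/d) ∈ upSet Q (C d * b) := by
          show (C (d * (phi Q b + ε/d)) : A) - C d * b ∈ Q
          rw [show (C (d * (phi Q b + ε/d)) : A) - C d * b
            = C d * (C (phi Q b + ε/d) - b) by rw [map_mul]; ring]
          exact hQ.smul_mem hd.le hmem
        have := phi_le_of_mem hQ harch hno this
        have hd' : d * (phi Q b + ε/d) = d * phi Q b + ε := by field_simp
        linarith [this, hd']
      have hge : d * phi Q b ≤ phi Q (C d * b) := by
        refine le_csInf (upSet_nonempty harch _) fun s hs => ?_
        have : s / d ∈ upSet Q b := by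
          show (C (s/d) : A) - b ∈ Q
          rw [show (C (s/d) : A) - b = C (1/d) * (C s - C d * b) by
            rw [mul_sub, ← map_mul, ← mul_assoc, ← map_mul]
            rw [show (1:ℝ)/d * d = 1 from by field_simp, map_one, one_mul]
            rw [show (1:ℝ)/d * s = s/d from by ring]]
          exact hQ.smul_mem (by positivity) hs
        have := phi_le_of_mem hQ harch hno this
        rw [le_div_iff₀ hd] at this
        linarith
      linarith
    have := hpos (-c) (by linarith) a
    rw [h1, phi_neg hQ harch hno hsemi] at this
    linarith
  · subst hc; simp [phi_zero hQ hno]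
  · -- positive case, same as hpos above
    have hle : phi Q (C c * a) ≤ c * phi Q a := by
      refine le_of_forall_pos_le_add fun ε hε => ?_
      have hmem : (phi Q a + ε/c) ∈ upSet Q a := mem_of_phi_lt hQ harch hno (by have := div_pos hε hc; linarith)
      have : c * (phi Q a + ε/c) ∈ upSet Q (C c * a) := by
        show (C (c * (phi Q a + ε/c)) : A) - C c * a ∈ Q
        rw [show (C (c * (phi Q a + ε/c)) : A) - C c * a
          = C c * (C (phi Q a + ε/c) - a) by rw [map_mul]; ring]
        exact hQ.smul_mem hc.le hmem
      have := phi_le_of_mem hQ harch hno this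
      have hd' : c * (phi Q a + ε/c) = c * phi Q a + ε := by field_simp
      linarith [this, hd']
    have hge : c * phi Q a ≤ phi Q (C c * a) := by
      refine le_csInf (upSet_nonempty harch _) fun s hs => ?_
      have : s / c ∈ upSet Q a := by
        show (C (s/c) : A) - a ∈ Q
        rw [show (C (s/c) : A) - a = C (1/c) * (C s - C c * a) by
          rw [mul_sub, ← map_mul, ← mul_assoc, ← map_mul]
          rw [show (1:ℝ)/c * c = 1 from by field_simp, map_one, one_mul]
          rw [show (1:ℝ)/c * s = s/c from by ring]]
        exact hQ.smul_mem (by positivity) hs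
      have := phi_le_of_mem hQ harch hno this
      rw [le_div_iff₀ hc] at this
      linarith
    linarith

include hQ harch hno hsemi in
lemma phi_sq (a : A) : phi Q (a ^ 2) = (phi Q a) ^ 2 := by
  have hge : (phi Q a) ^ 2 ≤ phi Q (a ^ 2) := by
    have h0 : ∀ t : ℝ, 0 ≤ phi Q (a ^ 2) + ((-(2*t)) * phi Q a + t ^ 2) := by
      intro t
      have hsqm : (a - C t) ^ 2 ∈ Q := hQ.sq _
      have hnn := phi_nonneg hQ harch hno hsqm
      have hexp : (a - C t) ^ 2 = a ^ 2 + (C (-(2*t)) * a + C (t ^ 2)) := by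
        rw [map_neg, map_mul, map_pow, map_ofNat]
        ring
      rw [hexp, phi_add hQ harch hno hsemi, phi_add hQ harch hno hsemi,
        phi_smul hQ harch hno hsemi, phi_const hQ hno] at hnn
      linarith
    have := h0 (phi Q a)
    nlinarith [this]
  have hle : phi Q (a ^ 2) ≤ (phi Q a) ^ 2 := by
    have key : ∀ r : ℝ, |phi Q a| < r → phi Q (a ^ 2) ≤ r ^ 2 := by
      intro r hr
      have hr0 : 0 < r := lt_of_le_of_lt (abs_nonneg _) hr
      have h1 : (C r : A) - a ∈ Q :=
        mem_of_phi_lt hQ harch hno (lt_of_le_of_lt (le_abs_self _) hr)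
      have h2 : (C r : A) + a ∈ Q := by
        have : phi Q (-a) < r := by
          rw [phi_neg hQ harch hno hsemi]
          exact lt_of_le_of_lt (neg_le_abs _) hr
        have h3 : (C r : A) - -a ∈ Q := mem_of_phi_lt hQ harch hno this
        rwa [sub_neg_eq_add] at h3
      have hw : (C r - a) ^ 2 * (C r + a) + (C r + a) ^ 2 * (C r - a) ∈ Q :=
        hQ.add (hQ.mul_sq _ h2) (hQ.mul_sq _ h1)
      have hid : (C r - a) ^ 2 * (C r + a) + (C r + a) ^ 2 * (C r - a)
          = C (2 * r) * (C (r ^ 2) - a ^ 2) := by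
        rw [map_mul, map_pow, map_ofNat]
        ring
      rw [hid] at hw
      have hmem : (C (r ^ 2) : A) - a ^ 2 ∈ Q := hQ.of_smul_mem (by linarith) hw
      have := phi_nonneg hQ harch hno hmem
      have hsub : (C (r ^ 2) : A) - a ^ 2 = C (r ^ 2) + (-(a ^ 2)) := by ring
      rw [hsub, phi_add hQ harch hno hsemi, phi_neg hQ harch hno hsemi,
        phi_const hQ hno] at this
      linarith
    refine le_of_forall_pos_le_add fun ε hε => ?_
    set b := |phi Q a| with hb
    have hb0 : 0 ≤ b := abs_nonneg _
    set δ : ℝ := min 1 (ε / (2 * b + 1)) with hδ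
    have hδ0 : 0 < δ := lt_min one_pos (by positivity)
    have hδ1 : δ ≤ 1 := min_le_left _ _
    have hδ2 : δ ≤ ε / (2 * b + 1) := min_le_right _ _
    have := key (b + δ) (by linarith)
    have hbb : (b + δ) ^ 2 ≤ b ^ 2 + δ * (2 * b + 1) := by nlinarith
    have hδ3 : δ * (2 * b + 1) ≤ ε := by
      rw [← le_div_iff₀ (by positivity)]
      exact hδ2
    have habs : b ^ 2 = (phi Q a) ^ 2 := sq_abs _
    nlinarith
  linarith

include hQ harch hno hsemi in
lemma phi_mul (a b : A) : phi Q (a * b) = phi Q a * phi Q b := by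
  have hid : (a + b) ^ 2 = a * b + a * b + a ^ 2 + b ^ 2 := by ring
  have h1 : phi Q ((a + b) ^ 2)
      = phi Q (a * b) + phi Q (a * b) + phi Q (a ^ 2) + phi Q (b ^ 2) := by
    rw [hid, phi_add hQ harch hno hsemi, phi_add hQ harch hno hsemi,
      phi_add hQ harch hno hsemi]
  rw [phi_sq hQ harch hno hsemi, phi_add hQ harch hno hsemi,
    phi_sq hQ harch hno hsemi, phi_sq hQ harch hno hsemi] at h1
  nlinarith [h1]

include hQ hno in
lemma phi_one : phi Q 1 = 1 := by
  have := phi_const (Q := Q) hQ hno 1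
  rwa [map_one] at this

include hQ harch hno hsemi in
/-- From a maximal archimedean quadratic module we get a point where all its
elements are nonnegative. -/
lemma exists_eval_point : ∃ x : Fin n → ℝ, ∀ q ∈ Q, 0 ≤ eval x q := by
  set F : MvPolynomial (Fin n) ℝ →+* ℝ :=
    { toFun := phi Q
      map_one' := phi_one hQ hno
      map_mul' := phi_mul hQ harch hno hsemi
      map_zero' := phi_zero hQ hno
      map_add' := phi_add hQ harch hno hsemi } with hF
  set x : Fin n → ℝ := fun i => phi Q (X i) with hx
  have hFeval : F = (eval x : MvPolynomial (Fin n) ℝ →+* ℝ) := by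
    apply ringHom_ext
    · intro r
      simp [hF, phi_const hQ hno r]
    · intro i
      simp [hF, hx]
  refine ⟨x, fun q hq => ?_⟩
  have h1 : phi Q q = eval x q := by
    have := congrFun (congrArg (fun (f : MvPolynomial (Fin n) ℝ →+* ℝ) => (f : MvPolynomial (Fin n) ℝ → ℝ)) hFeval) q
    simpa [hF] using this
  rw [← h1]
  exact phi_nonneg hQ harch hno hq

end Phi

section Main

variable {n s : ℕ} (g : Fin s → MvPolynomial (Fin n) ℝ)

/-- The quadratic module generated by `g` is an abstract quadratic module. -/
lemma isQM_quadModule : IsQM {f : MvPolynomial (Fin n) ℝ | InQuadraticModule g f} := by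
  constructor
  · rintro a b ⟨σ₀, σ, hσ₀, hσ, rfl⟩ ⟨τ₀, τ, hτ₀, hτ, rfl⟩
    refine ⟨σ₀ + τ₀, fun i => σ i + τ i, hσ₀.add hτ₀, fun i => (hσ i).add (hτ i), ?_⟩
    rw [show (∑ i, (σ i + τ i) * g i) = ∑ i, σ i * g i + ∑ i, τ i * g i by
      rw [← Finset.sum_add_distrib]; congr 1; ext i; ring]
    ring
  · intro p
    exact ⟨p ^ 2, fun _ => 0, IsSOS.sq p, fun _ => IsSOS.zero, by simp⟩
  · rintro p q ⟨σ₀, σ, hσ₀, hσ, rfl⟩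
    refine ⟨p ^ 2 * σ₀, fun i => p ^ 2 * σ i, hσ₀.mul_sq p, fun i => (hσ i).mul_sq p, ?_⟩
    rw [mul_add, Finset.mul_sum]
    refine congrArg (p ^ 2 * σ₀ + ·) (Finset.sum_congr rfl fun i _ => ?_)
    ring

/-- Each generator belongs to the quadratic module. -/
lemma gen_mem_quadModule (i : Fin s) : InQuadraticModule g (g i) := by
  classical
  refine ⟨0, fun j => if j = i then 1 else 0, IsSOS.zero,
    fun j => ?_, ?_⟩
  · by_cases h : j = i <;> simp [h, IsSOS.one, IsSOS.zero]
  · rw [show (∑ j, (if j = i then (1 : MvPolynomial (Fin n) ℝ) else 0) * g j) = g i by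
      rw [Finset.sum_eq_single i] <;> simp +contextual]
    ring

end Main
end PutinarAux

open PutinarAux in
theorem putinar (n s : ℕ) (g : Fin s → MvPolynomial (Fin n) ℝ)
    (harch : ∀ p : MvPolynomial (Fin n) ℝ, ∃ N : ℕ,
      InQuadraticModule g ((N : MvPolynomial (Fin n) ℝ) - p))
    (f : MvPolynomial (Fin n) ℝ)
    (hf : ∀ x : Fin n → ℝ, (∀ i, 0 ≤ eval x (g i)) → 0 < eval x f) :
    InQuadraticModule g f := by
  classical
  set M : Set (MvPolynomial (Fin n) ℝ) := {h | InQuadraticModule g h} with hM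
  have hQM : IsQM M := isQM_quadModule g
  have harchM : Arch M := fun p => harch p
  -- the quadratic module generated by `M` and `-f`
  set M' : Set (MvPolynomial (Fin n) ℝ) :=
    {x | ∃ m ∈ M, ∃ t, IsSOS t ∧ x = m - t * f} with hM'
  have hQM' : IsQM M' := by
    constructor
    · rintro a b ⟨m₁, hm₁, t₁, ht₁, rfl⟩ ⟨m₂, hm₂, t₂, ht₂, rfl⟩
      exact ⟨m₁ + m₂, hQM.add hm₁ hm₂, t₁ + t₂, ht₁.add ht₂, by ring⟩
    · intro p
      exact ⟨p ^ 2, hQM.sq p, 0, IsSOS.zero, by ring⟩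
    · rintro p q ⟨m, hm, t, ht, rfl⟩
      exact ⟨p ^ 2 * m, hQM.mul_sq p hm, p ^ 2 * t, ht.mul_sq p, by ring⟩
  have hMM' : M ⊆ M' := fun m hm => ⟨m, hm, 0, IsSOS.zero, by ring⟩
  have hnegf : -f ∈ M' := ⟨0, hQM.zero_mem, 1, IsSOS.one, by ring⟩
  by_cases hcase : (-1 : MvPolynomial (Fin n) ℝ) ∈ M'
  · -- `t * f - 1 ∈ M` for some SOS `t`; conclude by the descent lemma
    obtain ⟨m, hm, t, ht, hEq⟩ := hcase
    have h1 : t * f - 1 ∈ M := by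
      rw [show t * f - 1 = m + (-1 - (m - t * f)) by ring, show
        (-1 : MvPolynomial (Fin n) ℝ) - (m - t * f) = 0 from by rw [← hEq]; ring]
      simpa using hm
    exact hQM.mem_of_sos_mul_mem harchM ht h1
  · -- otherwise extend to a maximal quadratic module avoiding `-1`
    exfalso
    set S : Set (Set (MvPolynomial (Fin n) ℝ)) :=
      {Q | IsQM Q ∧ M' ⊆ Q ∧ (-1 : MvPolynomial (Fin n) ℝ) ∉ Q} with hS
    obtain ⟨Qm, hsub, hmax⟩ := zorn_subset_nonempty S (by
      intro c hcS hchain hcne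
      obtain ⟨Q₀, hQ₀⟩ := hcne
      refine ⟨⋃₀ c, ⟨?_, ?_, ?_⟩, fun s hs => Set.subset_sUnion_of_mem hs⟩
      · constructor
        · rintro a b ⟨Q₁, hQ₁, ha⟩ ⟨Q₂, hQ₂, hb⟩
          rcases hchain.total hQ₁ hQ₂ with h | h
          · exact ⟨Q₂, hQ₂, (hcS hQ₂).1.add (h ha) hb⟩
          · exact ⟨Q₁, hQ₁, (hcS hQ₁).1.add ha (h hb)⟩
        · intro p
          exact ⟨Q₀, hQ₀, (hcS hQ₀).1.sq p⟩
        · rintro p q ⟨Q₁, hQ₁, hq⟩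
          exact ⟨Q₁, hQ₁, (hcS hQ₁).1.mul_sq p hq⟩
      · exact fun x hx => ⟨Q₀, hQ₀, (hcS hQ₀).2.1 hx⟩
      · rintro ⟨Q₁, hQ₁, hmem⟩
        exact (hcS hQ₁).2.2 hmem) M' ⟨hQM', le_refl _, hcase⟩
    obtain ⟨hQMm, hM'Qm, hnoQm⟩ := hmax.prop
    have harchQm : Arch Qm := fun p => by
      obtain ⟨N, hN⟩ := harchM p
      exact ⟨N, hM'Qm (hMM' hN)⟩
    -- maximality gives the semiordering property
    have hsemi : ∀ a : MvPolynomial (Fin n) ℝ, a ∈ Qm ∨ -a ∈ Qm := by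
      intro a
      by_cases hna : -a ∈ Qm
      · exact Or.inr hna
      left
      set Q' : Set (MvPolynomial (Fin n) ℝ) :=
        {x | ∃ q ∈ Qm, ∃ t, IsSOS t ∧ x = q - t * a} with hQ'
      have hQMQ' : IsQM Q' := by
        constructor
        · rintro x y ⟨q₁, hq₁, t₁, ht₁, rfl⟩ ⟨q₂, hq₂, t₂, ht₂, rfl⟩
          exact ⟨q₁ + q₂, hQMm.add hq₁ hq₂, t₁ + t₂, ht₁.add ht₂, by ring⟩
        · intro p
          exact ⟨p ^ 2, hQMm.sq p, 0, IsSOS.zero, by ring⟩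
        · rintro p x ⟨q, hq, t, ht, rfl⟩
          exact ⟨p ^ 2 * q, hQMm.mul_sq p hq, p ^ 2 * t, ht.mul_sq p, by ring⟩
      have hsubQ' : Qm ⊆ Q' := fun q hq => ⟨q, hq, 0, IsSOS.zero, by ring⟩
      have hone : (-1 : MvPolynomial (Fin n) ℝ) ∈ Q' := by
        by_contra hno1
        have hQ'S : Q' ∈ S := ⟨hQMQ', fun x hx => hsubQ' (hM'Qm hx), hno1⟩
        have := hmax.le_of_ge hQ'S hsubQ'
        exact hna (this ⟨0, hQMm.zero_mem, 1, IsSOS.one, by ring⟩)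
      obtain ⟨q, hq, t, ht, hEq⟩ := hone
      have h1 : t * a - 1 ∈ Qm := by
        rw [show t * a - 1 = q + (-1 - (q - t * a)) by ring, show
          (-1 : MvPolynomial (Fin n) ℝ) - (q - t * a) = 0 from by rw [← hEq]; ring]
        simpa using hq
      exact hQMm.mem_of_sos_mul_mem harchQm ht h1
    obtain ⟨x, hx⟩ := exists_eval_point hQMm harchQm hnoQm hsemi
    have hgx : ∀ i, 0 ≤ eval x (g i) := fun i =>
      hx _ (hM'Qm (hMM' (gen_mem_quadModule g i)))
    have hfx : 0 < eval x f := hf x hgx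
    have hnx : 0 ≤ eval x (-f) := hx _ (hM'Qm hnegf)
    rw [map_neg] at hnx
    linarith
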